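/- For every infinite cardinal λ there exists a linear order of cardinality λ with strictly more than λ Dedekind cuts. -/

import Mathlib

open Cardinal

universe u

section Aux

variable {ι L : Type u} [LinearOrder ι] [WellFoundedLT ι] [LinearOrder L]

/-- Key lemma: if `g < g'` lexicographically, then there is a boundedly-supported
function `w` with `w ≤ g'` but `¬ w ≤ g`. -/
theorem stmt12_aux (z : L) (hz : ∀ x : L, z ≤ x) (g g' : Lex (ι → L))
    (hlt : g < g') :
    ∃ w : Lex (ι → L), (∃ b : ι, ∀ i : ι, b < i → ofLex w i = z) ∧
      w ≤ g' ∧ ¬ w ≤ g := by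
  classical
  obtain ⟨α, hagr, hα⟩ := hlt
  refine ⟨toLex (fun i => if i ≤ α then ofLex g' i else z), ⟨α, fun i hi => by
      simp [not_le.mpr hi]⟩, ?_, ?_⟩
  · -- w ≤ g'
    rcases eq_or_ne (toLex (fun i => if i ≤ α then ofLex g' i else z)) g' with he | hne
    · exact le_of_eq he
    · refine le_of_lt ?_
      have hne' : ∃ j : ι, (fun i => if i ≤ α then ofLex g' i else z) j ≠ ofLex g' j := by
        by_contra hc
        push_neg at hc
        exact hne (by funext i; exact hc i)
      obtain ⟨j, hj, hmin⟩ := (IsWellFounded.wf (α := ι) (r := (· < ·))).has_min _ hne'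
      refine ⟨j, fun k hk => ?_, ?_⟩
      · by_contra hne2
        exact hmin k hne2 hk
      · have hjα : ¬ j ≤ α := by
          intro hjle
          exact hj (by simp [hjle])
        have hjz : (fun i => if i ≤ α then ofLex g' i else z) j = z := by simp [hjα]
        show (fun i => if i ≤ α then ofLex g' i else z) j < ofLex g' j
        have h2 : z < ofLex g' j := lt_of_le_of_ne (hz _) fun he => hj (hjz.trans he)
        exact lt_of_le_of_lt (le_of_eq hjz) h2
  · -- ¬ w ≤ g
    refine not_le.mpr ?_
    refine ⟨α, fun k hk => ?_, ?_⟩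
    · have hk' : (fun i => if i ≤ α then ofLex g' i else z) k = ofLex g' k := by
        simp [le_of_lt hk]
      show g k = (fun i => if i ≤ α then ofLex g' i else z) k
      exact (hagr k hk).trans hk'.symm
    · have h1 : (fun i => if i ≤ α then ofLex g' i else z) α = ofLex g' α := by simp
      show g α < (fun i => if i ≤ α then ofLex g' i else z) α
      exact hα.trans_le (le_of_eq h1.symm)

end Aux

/-- For every infinite cardinal `lam` there exists a linear order of cardinality `lam`
with strictly more than `lam` Dedekind cuts (downward-closed subsets). -/
theorem stmt12 (lam : Cardinal.{u}) (h : ℵ₀ ≤ lam) :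
    ∃ (I : Type u) (r : I → I → Prop), IsLinearOrder I r ∧ #I = lam ∧
      lam < #{s : Set I // ∀ a ∈ s, ∀ b : I, r b a → b ∈ s} := by
  classical
  -- σ : the least cardinal with lam < lam ^ σ
  set S : Set Cardinal.{u} := {c | lam < lam ^ c} with hSdef
  have hlamS : lam ∈ S := by
    simp only [hSdef, Set.mem_setOf_eq, power_self_eq h]
    exact cantor lam
  set σ : Cardinal.{u} := sInf S with hσdef
  have hσS : σ ∈ S := csInf_mem ⟨lam, hlamS⟩
  have hσlam : σ ≤ lam := csInf_le' hlamS
  have hpow : ∀ c : Cardinal.{u}, c < σ → lam ^ c ≤ lam := by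
    intro c hc
    by_contra hcs
    have hmem : c ∈ S := not_le.mp hcs
    exact (not_le.mpr hc) (csInf_le' hmem)
  have hσinf : ℵ₀ ≤ σ := by
    by_contra hlt
    obtain ⟨n, hn⟩ := Cardinal.lt_aleph0.mp (not_le.mp hlt)
    have : lam < lam ^ (n : Cardinal.{u}) := hn ▸ hσS
    rw [power_natCast] at this
    exact absurd (power_nat_le h) (not_le.mpr this)
  have hσ0 : σ ≠ 0 := fun h0 => aleph0_ne_zero (le_zero_iff.mp (h0 ▸ hσinf))
  have hlam0 : lam ≠ 0 := fun h0 => aleph0_ne_zero (le_zero_iff.mp (h0 ▸ h))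
  -- index type and value type
  set ι : Type u := σ.ord.ToType with hιdef
  set L : Type u := lam.ord.ToType with hLdef
  have hι : #ι = σ := mk_ord_toType σ
  have hL : #L = lam := mk_ord_toType lam
  have hιne : Nonempty ι :=
    Ordinal.toType_nonempty_iff_ne_zero.2 (fun h0 => hσ0 (by simpa using congrArg Ordinal.card h0))
  have hLne : Nonempty L :=
    Ordinal.toType_nonempty_iff_ne_zero.2 (fun h0 => hlam0 (by simpa using congrArg Ordinal.card h0))
  have hnomax : NoMaxOrder ι := Cardinal.noMaxOrder hσinf
  -- least element of L
  obtain ⟨z, -, hz'⟩ := (IsWellFounded.wf (α := L) (r := (· < ·))).has_min Set.univ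
    ⟨Classical.arbitrary L, trivial⟩
  have hz : ∀ x : L, z ≤ x := fun x => not_lt.1 (hz' x trivial)
  -- the linear order I : boundedly supported functions ι → L, lexicographically
  set P : Lex (ι → L) → Prop := fun f => ∃ b : ι, ∀ i : ι, b < i → ofLex f i = z with hPdef
  set I : Type u := {f : Lex (ι → L) // P f} with hIdef
  refine ⟨I, (· ≤ ·), inferInstance, ?_, ?_⟩
  · -- #I = lam
    refine le_antisymm ?_ ?_
    · -- upper bound : inject into Σ b : ι, (Set.Iic b → L)
      have hinj : #I ≤ #(Σ b : ι, (Set.Iic b → L)) := by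
        set G : (Σ b : ι, (Set.Iic b → L)) → (ι → L) :=
          fun p => fun i => if hle : i ≤ p.1 then p.2 ⟨i, hle⟩ else z with hGdef
        have hGf : ∀ f : I, G ⟨Classical.choose f.2, fun i => ofLex f.1 i.1⟩ = ofLex f.1 := by
          intro f
          funext i
          by_cases hi : i ≤ Classical.choose f.2
          · simp only [hGdef, dif_pos hi]
          · simp only [hGdef, dif_neg hi]
            exact (Classical.choose_spec f.2 i (not_le.mp hi)).symm
        refine mk_le_of_injective (f := fun f : I =>
          (⟨Classical.choose f.2, fun i => ofLex f.1 i.1⟩ : Σ b : ι, (Set.Iic b → L))) ?_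
        intro f g hfg
        apply Subtype.ext
        have hfg' : (ofLex f.1 : ι → L) = ofLex g.1 :=
          (hGf f).symm.trans ((congrArg G hfg).trans (hGf g))
        exact hfg' 
      refine hinj.trans ?_
      rw [mk_sigma]
      have hterm : ∀ b : ι, #(Set.Iic b → L) ≤ lam := by
        intro b
        obtain ⟨b', hb'⟩ := exists_gt b
        have hsub : #(Set.Iic b) ≤ #(Set.Iio b') :=
          mk_le_mk_of_subset (fun x hx => lt_of_le_of_lt hx hb')
        have hlt : #(Set.Iic b) < σ := lt_of_le_of_lt hsub (mk_Iio_ord_toType b')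
        calc #(Set.Iic b → L) = lam ^ #(Set.Iic b) := by rw [← hL, power_def]
          _ ≤ lam := hpow _ hlt
      calc Cardinal.sum (fun b : ι => #(Set.Iic b → L))
          ≤ Cardinal.sum (fun _ : ι => lam) := Cardinal.sum_le_sum _ _ hterm
        _ = #ι * lam := sum_const' ι lam
        _ = lam := by
            rw [hι, mul_eq_max hσinf h, max_eq_right hσlam]
    · -- lower bound : inject L into I
      rw [← hL]
      refine mk_le_of_injective (f := fun a : L =>
        (⟨toLex (fun i : ι => if i = Classical.arbitrary ι then a else z),
          ⟨Classical.arbitrary ι, fun i hi => by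
            show (fun i : ι => if i = Classical.arbitrary ι then a else z) i = z
            simp [ne_of_gt hi]⟩⟩ : I)) ?_
      intro a b hab
      have := congrFun (congrArg (fun f : I => ofLex f.1) hab) (Classical.arbitrary ι)
      simpa using this
  · -- more than lam cuts
    have hcut : #(Lex (ι → L)) ≤ #{s : Set I // ∀ a ∈ s, ∀ b : I, b ≤ a → b ∈ s} := by
      refine mk_le_of_injective (f := fun g : Lex (ι → L) =>
        (⟨{x : I | x.1 ≤ g}, fun a ha b hba => le_trans (show b.1 ≤ a.1 from hba) ha⟩ :
          {s : Set I // ∀ a ∈ s, ∀ b : I, b ≤ a → b ∈ s})) ?_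
      intro g g' hgg'
      by_contra hne
      have key : ∀ u v : Lex (ι → L), u < v →
          ({x : I | x.1 ≤ u} : Set I) ≠ {x : I | x.1 ≤ v} := by
        intro u v huv heq
        obtain ⟨w, hwP, hwv, hwu⟩ := stmt12_aux z hz u v huv
        have : (⟨w, hwP⟩ : I) ∈ ({x : I | x.1 ≤ v} : Set I) := hwv
        rw [← heq] at this
        exact hwu this
      have hsets : ({x : I | x.1 ≤ g} : Set I) = {x : I | x.1 ≤ g'} :=
        congrArg Subtype.val hgg'
      rcases lt_trichotomy g g' with hlt | heq | hlt
      · exact key g g' hlt hsets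
      · exact hne heq
      · exact key g' g hlt hsets.symm
    refine lt_of_lt_of_le ?_ hcut
    have : #(Lex (ι → L)) = lam ^ σ := by
      rw [show #(Lex (ι → L)) = #(ι → L) from rfl, ← power_def, hL, hι]
    rw [this]
    exact hσS
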